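/- Let A = kQ/I be a finite-dimensional symmetric bound quiver algebra in which the image of every arrow is nonzero, and let C be a maximal nonzero path in A, i.e., C ∉ I but αC ∈ I and Cβ ∈ I for all arrows α, β. Then C is a cycle: s(C) = t(C). -/
import Mathlib


/-!
Statement 11: In a finite-dimensional symmetric bound quiver algebra in which every arrow
is nonzero, a maximal nonzero path C (C ∉ I but αC ∈ I and Cβ ∈ I for all arrows α, β)
is a cycle: s(C) = t(C).
-/

/-- A presentation of the algebra `A` as a bound quiver algebra `kQ/I`: a multiplicative
assignment of elements of `A` to the paths of `Q`, sending the trivial paths to a complete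
family of orthogonal idempotents, whose path images span `A`. The ideal `I` is recovered as
the set of paths `p` with `φ p = 0`. -/
structure QuivPres (k : Type*) [Field k] (V : Type*) [Quiver V] [Fintype V]
    (A : Type*) [Ring A] [Algebra k A] where
  φ : ∀ ⦃a b : V⦄, Quiver.Path a b → A
  φ_comp : ∀ ⦃a b c : V⦄ (p : Quiver.Path a b) (q : Quiver.Path b c),
    φ (p.comp q) = φ q * φ p
  φ_orth : ∀ ⦃a b : V⦄, a ≠ b →
    φ (Quiver.Path.nil : Quiver.Path a a) * φ (Quiver.Path.nil : Quiver.Path b b) = 0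
  φ_one : ∑ v : V, φ (Quiver.Path.nil : Quiver.Path v v) = 1
  φ_span : Submodule.span k {x : A | ∃ (a b : V) (p : Quiver.Path a b), φ p = x} = ⊤

/-- Admissibility of the kernel of a presentation: arrows survive in `A`, and all long
enough paths vanish. -/
def QuivPres.Admissible {k : Type*} [Field k] {V : Type*} [Quiver V] [Fintype V]
    {A : Type*} [Ring A] [Algebra k A] (P : QuivPres k V A) : Prop :=
  (∀ ⦃a b : V⦄ (f : a ⟶ b), P.φ f.toPath ≠ 0) ∧
    ∃ N : ℕ, ∀ ⦃a b : V⦄ (p : Quiver.Path a b), N ≤ p.length → P.φ p = 0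

/-- The (left) socle of a ring, as a left module over itself. -/
def leftSocle (A : Type*) [Ring A] : Submodule A A :=
  sSup {N : Submodule A A | IsSimpleModule A ↥N}

/-- maximal nonzero paths in symmetric algebras are cycles. -/
theorem maximal_path_is_cycle
    (k : Type*) [Field k] (V : Type*) [Quiver V] [Fintype V]
    (A : Type*) [Ring A] [Algebra k A] [FiniteDimensional k A]
    (P : QuivPres k V A)
    (ψ : A →ₗ[k] k) (hsymm : ∀ x y : A, ψ (x * y) = ψ (y * x))
    (hnd : ∀ x : A, (∀ y : A, ψ (x * y) = 0) → x = 0)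
    (harr : ∀ ⦃a b : V⦄ (f : a ⟶ b), P.φ f.toPath ≠ 0)
    {a b : V} (C : Quiver.Path a b) (hC : P.φ C ≠ 0)
    (hmaxL : ∀ (c : V) (α : b ⟶ c), P.φ (C.cons α) = 0)
    (hmaxR : ∀ (c : V) (β : c ⟶ a), P.φ (β.toPath.comp C) = 0) :
    a = b := by
  by_contra hab
  set c0 := P.φ C with hc0
  -- c0 absorbs the idempotents at its endpoints
  have hCa : c0 * P.φ (Quiver.Path.nil : Quiver.Path a a) = c0 := by
    have := P.φ_comp (Quiver.Path.nil : Quiver.Path a a) C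
    simpa using this.symm
  have hCb : P.φ (Quiver.Path.nil : Quiver.Path b b) * c0 = c0 := by
    have := P.φ_comp C (Quiver.Path.nil : Quiver.Path b b)
    simpa using this.symm
  have key : ∀ (c d : V) (p : Quiver.Path c d), ψ (c0 * P.φ p) = 0 := by
    intro c d p
    by_cases hd : d = a
    · subst hd
      cases p with
      | nil =>
        rw [hCa]
        have h1 : ψ c0 = ψ (c0 * P.φ (Quiver.Path.nil : Quiver.Path b b)) := by
          conv_lhs => rw [← hCb]
          rw [hsymm]
        have h2 : c0 * P.φ (Quiver.Path.nil : Quiver.Path b b) = 0 := by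
          rw [← hCa, mul_assoc, P.φ_orth hab, mul_zero]
        rw [h1, h2, map_zero]
      | cons q β =>
        have hcons : (q.cons β) = q.comp β.toPath := by simp [Quiver.Hom.toPath]
        rw [hcons, P.φ_comp, ← mul_assoc]
        have h3 : c0 * P.φ β.toPath = 0 := by
          have := P.φ_comp β.toPath C
          rw [hmaxR _ β] at this
          exact this.symm
        rw [h3, zero_mul, map_zero]
    · have hp : P.φ p = P.φ (Quiver.Path.nil : Quiver.Path d d) * P.φ p := by
        have := P.φ_comp p (Quiver.Path.nil : Quiver.Path d d)
        simpa using this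
      rw [hp, ← mul_assoc, ← hCa, mul_assoc c0, P.φ_orth (Ne.symm hd), mul_zero,
        zero_mul, map_zero]
  have hker : ∀ y : A, ψ (c0 * y) = 0 := by
    intro y
    set L : A →ₗ[k] k := ψ.comp (LinearMap.mulLeft k c0) with hL
    have hLy : ψ (c0 * y) = L y := rfl
    rw [hLy]
    have hsub : {x : A | ∃ (a b : V) (p : Quiver.Path a b), P.φ p = x} ⊆
        (LinearMap.ker L : Set A) := by
      rintro x ⟨c, d, p, rfl⟩
      exact key c d p
    have : Submodule.span k {x : A | ∃ (a b : V) (p : Quiver.Path a b), P.φ p = x} ≤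
        LinearMap.ker L := Submodule.span_le.mpr hsub
    rw [P.φ_span] at this
    exact this Submodule.mem_top
  exact hC (hnd c0 hker)
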